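/- arXiv:2302.13037 — 2 statements merged into one kernel-verified Lean document; each statement's English description precedes it below -/
import Mathlib

section
/- Let A and B be nonempty disjoint compact convex subsets of ℝ². Then there exists a nonempty open set O ⊆ S¹ of directions z such that for every z ∈ O, the orthogonal projections of A and B onto the line z^⊥ are disjoint: proj_z(A) ∩ proj_z(B) = ∅. -/
open Metric Set

noncomputable abbrev E2 := EuclideanSpace ℝ (Fin 2)

theorem exists_open_directions_separating_projections
    (A B : Set E2) (hA : A.Nonempty) (hB : B.Nonempty)
    (hAc : IsCompact A) (hBc : IsCompact B)
    (hAconv : Convex ℝ A) (hBconv : Convex ℝ B)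
    (hdisj : Disjoint A B) :
    ∃ O : Set (Metric.sphere (0 : E2) 1), IsOpen O ∧ O.Nonempty ∧
      ∀ z ∈ O, Disjoint
        ((fun x => (Submodule.orthogonalProjectionOnto ((ℝ ∙ (z : E2))ᗮ) x : E2)) '' A)
        ((fun x => (Submodule.orthogonalProjectionOnto ((ℝ ∙ (z : E2))ᗮ) x : E2)) '' B) := by
  obtain ⟨f, u, v, hfu, huv, hfv⟩ :=
    geometric_hahn_banach_compact_closed hAconv hAc hBconv hBc.isClosed hdisj
  obtain ⟨RA, hRA⟩ := isBounded_iff_forall_norm_le.mp hAc.isBounded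
  obtain ⟨RB, hRB⟩ := isBounded_iff_forall_norm_le.mp hBc.isBounded
  obtain ⟨a0, ha0⟩ := hA
  obtain ⟨b0, hb0⟩ := hB
  have hRA0 : 0 ≤ RA := le_trans (norm_nonneg a0) (hRA a0 ha0)
  have hRB0 : 0 ≤ RB := le_trans (norm_nonneg b0) (hRB b0 hb0)
  set M : ℝ := RA + RB + 1 with hMdef
  have hM : 0 < M := by positivity
  set ε : ℝ := (v - u) / M with hεdef
  have hε : 0 < ε := div_pos (sub_pos.mpr huv) hM
  -- find a unit vector in the kernel of f
  have hker_ne : LinearMap.ker (f : E2 →ₗ[ℝ] ℝ) ≠ ⊥ := by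
    intro h
    have hinj : Function.Injective (f : E2 →ₗ[ℝ] ℝ) := LinearMap.ker_eq_bot.mp h
    have hle := LinearMap.finrank_le_finrank_of_injective hinj
    simp [finrank_euclideanSpace] at hle
  obtain ⟨w, hwmem, hw0⟩ := Submodule.exists_mem_ne_zero_of_ne_bot hker_ne
  have hfw : f w = 0 := hwmem
  have hwnorm : ‖w‖ ≠ 0 := norm_ne_zero_iff.mpr hw0
  have hz0mem : (‖w‖⁻¹ • w) ∈ Metric.sphere (0 : E2) 1 := by
    simp [mem_sphere_zero_iff_norm, norm_smul, abs_of_nonneg (inv_nonneg.mpr (norm_nonneg w)),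
      inv_mul_cancel₀ hwnorm]
  refine ⟨{z : Metric.sphere (0 : E2) 1 | |f (z : E2)| < ε}, ?_, ?_, ?_⟩
  · exact isOpen_lt (by fun_prop) continuous_const
  · refine ⟨⟨‖w‖⁻¹ • w, hz0mem⟩, ?_⟩
    simp [Set.mem_setOf_eq, map_smul, hfw, hε]
  · intro z hz
    rw [Set.disjoint_left]
    rintro x ⟨a, ha, rfl⟩ ⟨b, hb, hPab⟩
    have hznorm : ‖(z : E2)‖ = 1 := mem_sphere_zero_iff_norm.mp z.2
    -- P(a-b) = 0
    have h1 : Submodule.orthogonalProjectionOnto ((ℝ ∙ (z : E2))ᗮ) (a - b) = 0 := by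
      rw [map_sub]
      have : Submodule.orthogonalProjectionOnto ((ℝ ∙ (z : E2))ᗮ) b
          = Submodule.orthogonalProjectionOnto ((ℝ ∙ (z : E2))ᗮ) a := Subtype.coe_injective hPab
      rw [this, sub_self]
    have h2 : a - b ∈ (((ℝ ∙ (z : E2))ᗮ)ᗮ) := by
      rwa [Submodule.orthogonalProjectionOnto_eq_zero_iff] at h1
    rw [Submodule.orthogonal_orthogonal] at h2
    obtain ⟨t, ht⟩ := Submodule.mem_span_singleton.mp h2
    -- norms
    have habM : ‖a - b‖ ≤ M := by
      calc ‖a - b‖ ≤ ‖a‖ + ‖b‖ := norm_sub_le a b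
        _ ≤ RA + RB := add_le_add (hRA a ha) (hRB b hb)
        _ ≤ M := by simp [hMdef]
    have htnorm : |t| = ‖a - b‖ := by
      rw [← ht, norm_smul, hznorm, mul_one, Real.norm_eq_abs]
    have hfab : f (a - b) = t * f (z : E2) := by
      rw [← ht, map_smul]; rfl
    have hlt : f (a - b) < u - v := by
      have := hfu a ha
      have := hfv b hb
      simp only [map_sub]
      linarith
    have habs : v - u < |f (a - b)| := by
      rw [abs_of_neg (by linarith)]
      linarith
    have habs2 : |f (a - b)| < v - u := by
      rw [hfab, abs_mul]
      calc |t| * |f (z : E2)| ≤ M * |f (z : E2)| := by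
            apply mul_le_mul_of_nonneg_right _ (abs_nonneg _)
            rw [htnorm]; exact habM
        _ < M * ε := by
            apply (mul_lt_mul_iff_right₀ hM).mpr
            exact hz
        _ = v - u := by rw [hεdef]; field_simp
    linarith
end

section
/- Let A and B be disjoint convex subsets of ℝ², let C = { (a−b)/‖a−b‖ : a ∈ A, b ∈ B } be the set of unit vectors directing from B to A, and −C its antipodal set. Then C ∩ (−C) = ∅; that is, there are no points a₁,a₂ ∈ A and b₁,b₂ ∈ B with (a₁−b₁)/‖a₁−b₁‖ = (b₂−a₂)/‖b₂−a₂‖. -/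
theorem direction_cone_antipodal_disjoint
    (A B : Set (EuclideanSpace ℝ (Fin 2)))
    (hAconv : Convex ℝ A) (hBconv : Convex ℝ B) (hdisj : Disjoint A B) :
    ∀ a₁ ∈ A, ∀ a₂ ∈ A, ∀ b₁ ∈ B, ∀ b₂ ∈ B,
      ‖a₁ - b₁‖⁻¹ • (a₁ - b₁) ≠ ‖b₂ - a₂‖⁻¹ • (b₂ - a₂) := by
  intro a₁ ha₁ a₂ ha₂ b₁ hb₁ b₂ hb₂ h
  have hne1 : a₁ - b₁ ≠ 0 := by
    intro hc
    exact Set.disjoint_left.mp hdisj ha₁ (by rwa [sub_eq_zero.mp hc])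
  have hne2 : b₂ - a₂ ≠ 0 := by
    intro hc
    exact Set.disjoint_left.mp hdisj ha₂ (by rw [← sub_eq_zero.mp hc]; exact hb₂)
  set r : ℝ := ‖a₁ - b₁‖ with hr
  set s : ℝ := ‖b₂ - a₂‖ with hs
  have hrpos : 0 < r := norm_pos_iff.mpr hne1
  have hspos : 0 < s := norm_pos_iff.mpr hne2
  have key : s • (a₁ - b₁) = r • (b₂ - a₂) := by
    have := congrArg (fun v => (r * s) • v) h
    simp only [smul_smul] at this
    rw [show r * s * r⁻¹ = s by field_simp, show r * s * s⁻¹ = r by field_simp] at this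
    exact this
  have hsum : 0 < r + s := by linarith
  have hcomb : (s / (r + s)) • a₁ + (r / (r + s)) • a₂
      = (s / (r + s)) • b₁ + (r / (r + s)) • b₂ := by
    have : s • a₁ + r • a₂ = s • b₁ + r • b₂ := by
      have h1 : s • a₁ - s • b₁ = r • b₂ - r • a₂ := by
        rw [← smul_sub, ← smul_sub]; exact key
      linear_combination (norm := module) h1
    have := congrArg (fun v => (r + s)⁻¹ • v) this
    simp only [smul_add, smul_smul] at this
    simpa [div_eq_inv_mul] using this
  have hwA : (s / (r + s)) • a₁ + (r / (r + s)) • a₂ ∈ A :=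
    hAconv ha₁ ha₂ (by positivity) (by positivity)
      (by field_simp; ring)
  have hwB : (s / (r + s)) • b₁ + (r / (r + s)) • b₂ ∈ B :=
    hBconv hb₁ hb₂ (by positivity) (by positivity)
      (by field_simp; ring)
  exact Set.disjoint_left.mp hdisj hwA (hcomb ▸ hwB)
end
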